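/- Let s be a weak composition, T an s-Tamari tree, and (a,b), (c,d) Tamari tree ascents of T with a < c. Let Z and Q be the s-Tamari rotations of T along (a,b) and (c,d) respectively. Then (c,d) is always a Tamari tree ascent of Z; and if (a,b) is not a Tamari tree ascent of Q, then b = c and a is the 0th child of c in T. -/
import Mathlib


open scoped Classical

/-- An `s`-decreasing tree with internal vertices `1,…,n` (the root is `n`), encoded by
recording, for each non-root internal vertex `v`, its parent `parent v` (an internal vertex
with a larger label, so that labels decrease away from the root) and the index `idx v` of
the child slot of `parent v` (among `0,…,s (parent v)`, left to right) containing `v`.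
Distinct internal vertices occupy distinct child slots; all remaining slots are leaves. -/
structure SDecTree (n : ℕ) (s : ℕ → ℕ) where
  parent : ℕ → ℕ
  idx : ℕ → ℕ
  parent_gt : ∀ v, 1 ≤ v → v < n → v < parent v
  parent_le : ∀ v, 1 ≤ v → v < n → parent v ≤ n
  idx_le : ∀ v, 1 ≤ v → v < n → idx v ≤ s (parent v)
  slot_inj : ∀ v w, 1 ≤ v → v < n → 1 ≤ w → w < n →
      parent v = parent w → idx v = idx w → v = w
  parent_out : ∀ v, v = 0 ∨ n ≤ v → parent v = 0
  idx_out : ∀ v, v = 0 ∨ n ≤ v → idx v = 0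

namespace SDecTree

variable {n : ℕ} {s : ℕ → ℕ}

/-- `y` is a weak ancestor of `x`, i.e. `x` is a labeled vertex of the subtree `T^y`. -/
def Descend (T : SDecTree n s) (x y : ℕ) : Prop :=
  ∃ k, T.parent^[k] x = y ∧ ∀ m ≤ k, 1 ≤ T.parent^[m] x ∧ T.parent^[m] x ≤ n

/-- `x` is a labeled vertex of the subtree `T^y_j` rooted at the `j`-th child of `y`. -/
def InSub (T : SDecTree n s) (y j x : ℕ) : Prop :=
  ∃ c, T.Descend x c ∧ T.parent c = y ∧ T.idx c = j

/-- `x` lies strictly left of `y` in the planar tree `T`. -/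
def LeftOf (T : SDecTree n s) (x y : ℕ) : Prop :=
  ∃ z j₁ j₂, j₁ < j₂ ∧ T.InSub z j₁ x ∧ T.InSub z j₂ y

/-- The cardinality `#_T(y,x)` of the pair `(y,x)`: it is `j` if `x ∈ T^y_j`
(so `0` if `x ∈ T^y_0` and `s y` if `x ∈ T^y_{s y}`), `0` if `x` is left of `y`, and
`s y` if `x` is right of `y`; it is `0` for out-of-range pairs. -/
noncomputable def card (T : SDecTree n s) (y x : ℕ) : ℕ :=
  if h : ∃ j, T.InSub y j x then h.choose
  else if 1 ≤ x ∧ x < y ∧ y ≤ n ∧ ¬ T.LeftOf x y then s y else 0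

/-- `x` is a labeled vertex of `T^a ∖ 0`, i.e. of `T^a` with `T^a_0` replaced by a leaf. -/
def InSubMinus0 (T : SDecTree n s) (a x : ℕ) : Prop :=
  x = a ∨ ∃ j, 0 < j ∧ T.InSub a j x

/-- `(a,b)` is a tree ascent of `T`. -/
def TreeAscent (T : SDecTree n s) (a b : ℕ) : Prop :=
  1 ≤ a ∧ a < b ∧ b ≤ n ∧
  (∃ i, i < s b ∧ T.InSub b i a) ∧
  (∀ e j, a < e → e < b → T.InSub e j a → j = s e) ∧
  (0 < s a → ∀ x, ¬ T.InSub a (s a) x)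

end SDecTree

/-- A multi-inversion set (encoded by its multiplicity function) is transitive:
if `a < b < c` then `#(b,a) = 0` or `#(c,a) ≥ #(c,b)`. -/
def IsTransitiveInv (I : ℕ → ℕ → ℕ) : Prop :=
  ∀ a b c, a < b → b < c → I b a = 0 ∨ I c b ≤ I c a

/-- The transitive closure of a multi-inversion set: the smallest (by inclusion, i.e.
pointwise on multiplicities) transitive multi-inversion set containing it. -/
noncomputable def tcInv (I : ℕ → ℕ → ℕ) : ℕ → ℕ → ℕ := fun y x =>
  sInf {m | ∃ J : ℕ → ℕ → ℕ, IsTransitiveInv J ∧ (∀ y' x', I y' x' ≤ J y' x') ∧ J y x = m}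

/-- Add one copy of the inversion `(b,a)` to `I`, capping the multiplicity at `s b`. -/
def addInv (s : ℕ → ℕ) (I : ℕ → ℕ → ℕ) (b a : ℕ) : ℕ → ℕ → ℕ := fun y x =>
  if y = b ∧ x = a then min (I y x + 1) (s y) else I y x

namespace SDecTree

variable {n : ℕ} {s : ℕ → ℕ}

/-- The `s`-weak order: `T ⪯ Z` iff `#_T(y,x) ≤ #_Z(y,x)` for all pairs. -/
def wle (T Z : SDecTree n s) : Prop := ∀ y x, T.card y x ≤ Z.card y x

/-- Strict `s`-weak order. -/
def wlt (T Z : SDecTree n s) : Prop := wle T Z ∧ ¬ wle Z T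

/-- Cover relation in the `s`-weak order. -/
def wcov (T Z : SDecTree n s) : Prop := wlt T Z ∧ ∀ U, wlt T U → wlt U Z → False

/-- `W` is the join of `T` and `Z` in the `s`-weak order. -/
def IsJoin (T Z W : SDecTree n s) : Prop :=
  wle T W ∧ wle Z W ∧ ∀ U, wle T U → wle Z U → wle W U

/-- `Z` is the `s`-tree rotation of `T` along the tree ascent `(a,b)`, i.e.
`inv Z = (inv T + (b,a))^tc`. -/
def IsRotation (T Z : SDecTree n s) (a b : ℕ) : Prop :=
  T.TreeAscent a b ∧
  ∀ y x, 1 ≤ x → x < y → y ≤ n → Z.card y x = tcInv (addInv s T.card b a) y x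

/-- The set `A_T(a,b)` of inversions added by a rotation producing `Z`: the pairs `(f,e)`
with `#_Z(f,e) > #_T(f,e)`. -/
def Aset (T Z : SDecTree n s) : Set (ℕ × ℕ) :=
  {p | T.card p.1 p.2 < Z.card p.1 p.2}

/-- The set `A_T(a,b)` described directly via the transitive closure. -/
def ARot (T : SDecTree n s) (a b : ℕ) : Set (ℕ × ℕ) :=
  {p | T.card p.1 p.2 < tcInv (addInv s T.card b a) p.1 p.2}

/-- The set `F_T(a,c)` (here `b` and `d` are the partners of `a` and `c` in the
respective tree ascents `(a,b)` and `(c,d)`): it is `{(d,e) : e ∈ T^a∖0}` if `b = c`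
and `a ∈ T^c_0`, and empty otherwise. -/
def Fset (T : SDecTree n s) (a b c d : ℕ) : Set (ℕ × ℕ) :=
  {p | b = c ∧ T.InSub c 0 a ∧ p.1 = d ∧ T.InSubMinus0 a p.2}

/-- `T` is an `s`-Tamari tree: `#_T(c,a) ≤ #_T(c,b)` whenever `a < b < c`. -/
def IsTamari (T : SDecTree n s) : Prop :=
  ∀ a b c, a < b → b < c → T.card c a ≤ T.card c b

/-- `(a,b)` is a Tamari tree ascent of `T`: `a` is a non-rightmost child of `b`. -/
def TamariAscent (T : SDecTree n s) (a b : ℕ) : Prop :=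
  1 ≤ a ∧ a < n ∧ T.parent a = b ∧ T.card b a < s b

/-- `Z` is the `s`-Tamari rotation of `T` along the Tamari tree ascent `(a,b)`. -/
def IsTamRotation (T Z : SDecTree n s) (a b : ℕ) : Prop :=
  T.TamariAscent a b ∧
  ∀ y x, 1 ≤ x → x < y → y ≤ n → Z.card y x = tcInv (addInv s T.card b a) y x

/-- Cover relation in the `s`-Tamari lattice. -/
def tamcov (T Z : SDecTree n s) : Prop :=
  IsTamari T ∧ IsTamari Z ∧ wlt T Z ∧ ∀ U, IsTamari U → wlt T U → wlt U Z → False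

/-- `W` is the join of `T` and `Z` in the `s`-Tamari lattice. -/
def IsTamJoin (T Z W : SDecTree n s) : Prop :=
  IsTamari W ∧ wle T W ∧ wle Z W ∧ ∀ U, IsTamari U → wle T U → wle Z U → wle W U

/-- The open interval `(T,Z)` in the `s`-weak order. -/
def OpenInterval (T Z : SDecTree n s) : Set (SDecTree n s) := {U | wlt T U ∧ wlt U Z}

/-- A set of trees forming a chain in the `s`-weak order. -/
def IsChainSet (C : Set (SDecTree n s)) : Prop :=
  C.Pairwise fun U V => wlt U V ∨ wlt V U

/-- The geometric realization of the order complex `Δ(T,Z)` of the open interval `(T,Z)`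
in the `s`-weak order: the space of finitely supported probability vectors on the vertex
set whose support is a chain of the open interval. -/
def orderComplex (T Z : SDecTree n s) : Set (SDecTree n s → ℝ) :=
  {f | (∀ U, 0 ≤ f U) ∧ (Function.support f).Finite ∧
    Function.support f ⊆ OpenInterval T Z ∧ IsChainSet (Function.support f) ∧
    ∑ᶠ U, f U = 1}

/-- The geometric realization of the order complex of the open interval `(T,Z)` in the
`s`-Tamari lattice. -/
def tamOrderComplex (T Z : SDecTree n s) : Set (SDecTree n s → ℝ) :=
  {f | (∀ U, 0 ≤ f U) ∧ (Function.support f).Finite ∧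
    Function.support f ⊆ {U | IsTamari U ∧ wlt T U ∧ wlt U Z} ∧
    IsChainSet (Function.support f) ∧ ∑ᶠ U, f U = 1}

end SDecTree

namespace SDecTree

variable {n : ℕ} {s : ℕ → ℕ} (T : SDecTree n s)

lemma iter_lt_succ {x k m : ℕ}
    (hm : ∀ m' ≤ k, 1 ≤ T.parent^[m'] x ∧ T.parent^[m'] x ≤ n)
    (h : m < k) : T.parent^[m] x < T.parent^[m+1] x := by
  have h1 := hm m h.le
  have h2 := hm (m+1) h
  rw [Function.iterate_succ_apply'] at h2 ⊢
  refine T.parent_gt _ h1.1 ?_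
  rcases lt_or_eq_of_le h1.2 with h' | h'
  · exact h'
  · exfalso
    have := T.parent_out (T.parent^[m] x) (Or.inr h'.ge)
    omega

lemma iter_mono {x k : ℕ}
    (hm : ∀ m' ≤ k, 1 ≤ T.parent^[m'] x ∧ T.parent^[m'] x ≤ n)
    {a b : ℕ} (hab : a ≤ b) (hbk : b ≤ k) : T.parent^[a] x ≤ T.parent^[b] x := by
  induction b with
  | zero =>
    have : a = 0 := by omega
    simp [this]
  | succ p ih =>
    rcases Nat.lt_or_ge a (p+1) with h | h
    · exact le_trans (ih (by omega) (by omega)) (T.iter_lt_succ hm (by omega)).le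
    · have : a = p + 1 := by omega
      simp [this]

lemma iter_strict_mono {x k : ℕ}
    (hm : ∀ m' ≤ k, 1 ≤ T.parent^[m'] x ∧ T.parent^[m'] x ≤ n)
    {a b : ℕ} (hab : a < b) (hbk : b ≤ k) : T.parent^[a] x < T.parent^[b] x := by
  have h1 : T.parent^[a] x < T.parent^[a+1] x := T.iter_lt_succ hm (by omega)
  exact lt_of_lt_of_le h1 (T.iter_mono hm (by omega) hbk)

variable {T}

lemma descend_bounds {x y : ℕ} (h : T.Descend x y) :
    1 ≤ x ∧ x ≤ n ∧ 1 ≤ y ∧ y ≤ n := by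
  obtain ⟨k, hk, hb⟩ := h
  have h0 := hb 0 (Nat.zero_le _)
  have hk' := hb k le_rfl
  simp only [Function.iterate_zero_apply] at h0
  rw [hk] at hk'
  exact ⟨h0.1, h0.2, hk'.1, hk'.2⟩

lemma descend_le {x y : ℕ} (h : T.Descend x y) : x ≤ y := by
  obtain ⟨k, hk, hb⟩ := h
  have := T.iter_mono hb (Nat.zero_le k) le_rfl
  simpa [hk] using this

lemma descend_refl {x : ℕ} (h1 : 1 ≤ x) (h2 : x ≤ n) : T.Descend x x :=
  ⟨0, rfl, by intro m hm; interval_cases m; simpa using ⟨h1, h2⟩⟩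

lemma descend_trans {x y z : ℕ} (h1 : T.Descend x y) (h2 : T.Descend y z) :
    T.Descend x z := by
  obtain ⟨k, hk, hbk⟩ := h1
  obtain ⟨l, hl, hbl⟩ := h2
  refine ⟨l + k, ?_, ?_⟩
  · rw [Function.iterate_add_apply, hk, hl]
  · intro m hm
    rcases Nat.le_total m k with h | h
    · exact hbk m h
    · have : m = (m - k) + k := by omega
      rw [this, Function.iterate_add_apply, hk]
      exact hbl (m - k) (by omega)

lemma descend_total {x y z : ℕ} (h1 : T.Descend x y) (h2 : T.Descend x z)
    (hyz : y ≤ z) : T.Descend y z := by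
  obtain ⟨k, hk, hbk⟩ := h1
  obtain ⟨l, hl, hbl⟩ := h2
  rcases Nat.le_total k l with h | h
  · refine ⟨l - k, ?_, ?_⟩
    · rw [← hk, ← Function.iterate_add_apply, Nat.sub_add_cancel h, hl]
    · intro m hm
      rw [← hk, ← Function.iterate_add_apply]
      exact hbl (m + k) (by omega)
  · rcases Nat.eq_or_lt_of_le h with h' | h'
    · have hyz' : y = z := by rw [← hk, ← hl, h']
      subst hyz'
      have hb := descend_bounds (⟨k, hk, hbk⟩ : T.Descend x y)
      exact T.descend_refl hb.2.2.1 hb.2.2.2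
    · exfalso
      have := T.iter_strict_mono hbk h' le_rfl
      rw [hk, hl] at this
      omega

lemma descend_step {x : ℕ} (h1 : 1 ≤ x) (h2 : x < n) : T.Descend x (T.parent x) := by
  refine ⟨1, by simp, ?_⟩
  intro m hm
  interval_cases m
  · simpa using ⟨h1, h2.le⟩
  · simp only [Function.iterate_one]
    exact ⟨le_trans h1 (T.parent_gt x h1 h2).le, T.parent_le x h1 h2⟩

lemma descend_to_root {x : ℕ} (h1 : 1 ≤ x) (h2 : x ≤ n) : T.Descend x n := by
  by_cases hx : x = n
  · subst hx; exact T.descend_refl h1 h2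
  · have hxn : x < n := lt_of_le_of_ne h2 hx
    have hp1 : 1 ≤ T.parent x := le_trans h1 (T.parent_gt x h1 hxn).le
    have hp2 : T.parent x ≤ n := T.parent_le x h1 hxn
    have : n - T.parent x < n - x := by have := T.parent_gt x h1 hxn; omega
    exact descend_trans (T.descend_step h1 hxn) (descend_to_root hp1 hp2)
termination_by n - x

lemma descend_parent_le {x y : ℕ} (h : T.Descend x y) (hne : x ≠ y) :
    T.parent x ≤ y := by
  obtain ⟨k, hk, hb⟩ := h
  have hk0 : k ≠ 0 := by rintro rfl; exact hne (by simpa using hk)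
  have := T.iter_mono hb (Nat.one_le_iff_ne_zero.mpr hk0) le_rfl
  simpa [hk] using this

end SDecTree
namespace SDecTree

variable {n : ℕ} {s : ℕ → ℕ} {T : SDecTree n s}

lemma descend_parent {x y : ℕ} (h : T.Descend x y) (hne : x ≠ y) :
    T.Descend (T.parent x) y := by
  obtain ⟨k, hk, hb⟩ := h
  have hk0 : k ≠ 0 := by rintro rfl; exact hne (by simpa using hk)
  have hk1 : k - 1 + 1 = k := by omega
  refine ⟨k - 1, ?_, ?_⟩
  · have h2 := Function.iterate_succ_apply T.parent (k-1) x
    rw [← h2, Nat.succ_eq_add_one, hk1, hk]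
  · intro m hm
    have h2 := Function.iterate_succ_apply T.parent m x
    rw [← h2]
    exact hb (m + 1) (by omega)

lemma insub_of_descend_ne {x y : ℕ} (h : T.Descend x y) (hne : x ≠ y) :
    ∃ j c, T.Descend x c ∧ T.parent c = y ∧ T.idx c = j := by
  obtain ⟨k, hk, hb⟩ := h
  have hk0 : k ≠ 0 := by rintro rfl; exact hne (by simpa using hk)
  have hk1 : k - 1 + 1 = k := by omega
  refine ⟨T.idx (T.parent^[k-1] x), T.parent^[k-1] x, ⟨k - 1, rfl, ?_⟩, ?_, rfl⟩
  · intro m hm; exact hb m (by omega)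
  · have h2 := Function.iterate_succ_apply' T.parent (k-1) x
    rw [← h2, Nat.succ_eq_add_one, hk1, hk]

lemma insub_exists_of_descend {x y : ℕ} (h : T.Descend x y) (hne : x ≠ y) :
    ∃ j, T.InSub y j x := by
  obtain ⟨j, c, h1, h2, h3⟩ := insub_of_descend_ne h hne
  exact ⟨j, c, h1, h2, h3⟩

lemma insub_witness_lt {c : ℕ} (hb : 1 ≤ c ∧ c ≤ n) (hp : 1 ≤ T.parent c) : c < n := by
  rcases lt_or_eq_of_le hb.2 with h | h
  · exact h
  · exfalso; have := T.parent_out c (Or.inr h.ge); omega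

lemma descend_of_insub {y j x : ℕ} (h : T.InSub y j x) (hy : 1 ≤ y) :
    T.Descend x y := by
  obtain ⟨c, hc, hpc, _⟩ := h
  have hbc := descend_bounds hc
  have hcn : c < n := insub_witness_lt ⟨hbc.2.2.1, hbc.2.2.2⟩ (hpc ▸ hy)
  exact descend_trans hc (hpc ▸ T.descend_step hbc.2.2.1 hcn)

lemma insub_lt {y j x : ℕ} (h : T.InSub y j x) (hy : 1 ≤ y) : x < y := by
  obtain ⟨c, hc, hpc, _⟩ := h
  have hbc := descend_bounds hc
  have hcn : c < n := insub_witness_lt ⟨hbc.2.2.1, hbc.2.2.2⟩ (hpc ▸ hy)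
  exact lt_of_le_of_lt (descend_le hc) (hpc ▸ T.parent_gt c hbc.2.2.1 hcn)

lemma insub_trans {x y w j : ℕ} (hxy : T.Descend x y) (h : T.InSub w j y) :
    T.InSub w j x := by
  obtain ⟨c, hc, hpc, hic⟩ := h
  exact ⟨c, descend_trans hxy hc, hpc, hic⟩

lemma insub_mono {x y w j : ℕ} (h : T.InSub w j x) (hxy : T.Descend x y)
    (hyw : y < w) : T.InSub w j y := by
  obtain ⟨c, hc, hpc, hic⟩ := h
  have hyc : y ≤ c := by
    by_contra hcy
    push_neg at hcy
    have hcy' := descend_total hc hxy hcy.le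
    have := descend_parent_le hcy' (ne_of_lt hcy)
    omega
  exact ⟨c, descend_total hxy hc hyc, hpc, hic⟩

lemma insub_unique {y j j' x : ℕ} (hy : 1 ≤ y) (h1 : T.InSub y j x)
    (h2 : T.InSub y j' x) : j = j' := by
  obtain ⟨c, hc, hpc, hic⟩ := h1
  obtain ⟨c', hc', hpc', hic'⟩ := h2
  have hbc := descend_bounds hc
  have hbc' := descend_bounds hc'
  have hcn : c < n := insub_witness_lt ⟨hbc.2.2.1, hbc.2.2.2⟩ (hpc ▸ hy)
  have hcn' : c' < n := insub_witness_lt ⟨hbc'.2.2.1, hbc'.2.2.2⟩ (hpc' ▸ hy)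
  have hcc : c = c' := by
    rcases lt_trichotomy c c' with h | h | h
    · exfalso
      have := descend_parent_le (descend_total hc hc' h.le) (ne_of_lt h)
      rw [hpc] at this
      have := T.parent_gt c' hbc'.2.2.1 hcn'
      omega
    · exact h
    · exfalso
      have := descend_parent_le (descend_total hc' hc h.le) (ne_of_lt h)
      rw [hpc'] at this
      have := T.parent_gt c hbc.2.2.1 hcn
      omega
  rw [← hic, ← hic', hcc]

lemma card_insub {y j x : ℕ} (hy : 1 ≤ y) (h : T.InSub y j x) : T.card y x = j := by
  have hex : ∃ j, T.InSub y j x := ⟨j, h⟩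
  rw [card, dif_pos hex]
  exact insub_unique hy hex.choose_spec h

lemma card_not_insub {y x : ℕ} (h : ¬ ∃ j, T.InSub y j x) :
    T.card y x = if 1 ≤ x ∧ x < y ∧ y ≤ n ∧ ¬ T.LeftOf x y then s y else 0 := by
  rw [card, dif_neg h]

lemma insub_zero_eq {j x : ℕ} (h : T.InSub 0 j x) : j = 0 := by
  obtain ⟨c, hc, hpc, hic⟩ := h
  have hbc := descend_bounds hc
  have hcn : c = n := by
    by_contra hcn
    have := T.parent_gt c hbc.2.2.1 (lt_of_le_of_ne hbc.2.2.2 hcn)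
    omega
  rw [← hic, hcn]
  exact T.idx_out n (Or.inr le_rfl)

/-- key: cards propagate up from a subtree -/
lemma descend_card {x y z : ℕ} (hxy : T.Descend x y) (hz : y < z) :
    T.card z x = T.card z y := by
  have hb := descend_bounds hxy
  have hz1 : 1 ≤ z := by omega
  by_cases h1 : ∃ j, T.InSub z j x
  · obtain ⟨j, hj⟩ := h1
    rw [card_insub hz1 hj, card_insub hz1 (insub_mono hj hxy hz)]
  · by_cases h2 : ∃ j, T.InSub z j y
    · exact absurd ⟨h2.choose, insub_trans hxy h2.choose_spec⟩ h1
    · rw [card_not_insub h1, card_not_insub h2]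
      by_cases hzn : z ≤ n
      · have hiff : T.LeftOf x z ↔ T.LeftOf y z := by
          constructor
          · rintro ⟨w, j1, j2, h12, ⟨c1, hc1, hpc1, hic1⟩, hw2⟩
            have hw1 : 1 ≤ w := by
              by_contra hw0
              push_neg at hw0
              interval_cases w
              have e1 := insub_zero_eq (⟨c1, hc1, hpc1, hic1⟩ : T.InSub 0 j1 x)
              have e2 := insub_zero_eq hw2
              omega
            rcases le_or_gt y c1 with h | h
            · exact ⟨w, j1, j2, h12, ⟨c1, descend_total hxy hc1 h, hpc1, hic1⟩, hw2⟩
            · exfalso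
              have hd := descend_total hc1 hxy h.le
              have h5 := descend_parent_le hd (ne_of_lt h)
              rw [hpc1] at h5
              have h6 := insub_lt hw2 hw1
              omega
          · rintro ⟨w, j1, j2, h12, hw1, hw2⟩
            exact ⟨w, j1, j2, h12, insub_trans hxy hw1, hw2⟩
        have hxle := descend_le hxy
        by_cases hl : T.LeftOf y z
        · rw [if_neg (by tauto), if_neg (by tauto)]
        · rw [if_pos ⟨hb.1, by omega, hzn, by tauto⟩, if_pos ⟨hb.2.2.1, hz, hzn, hl⟩]
      · rw [if_neg (by tauto), if_neg (by tauto)]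

end SDecTree
namespace SDecTree

variable {n : ℕ} {s : ℕ → ℕ} {T : SDecTree n s}

/-- least common ancestor -/
lemma lca {x y : ℕ} (hx1 : 1 ≤ x) (hxn : x ≤ n) (hy1 : 1 ≤ y) (hyn : y ≤ n)
    (hnd1 : ¬ T.Descend x y) (hnd2 : ¬ T.Descend y x) :
    ∃ z u v, x < z ∧ y < z ∧ z ≤ n ∧ u ≠ v ∧ T.InSub z u x ∧ T.InSub z v y := by
  classical
  set S : Set ℕ := {v | T.Descend x v ∧ T.Descend y v} with hS
  have hnS : n ∈ S := ⟨descend_to_root hx1 hxn, descend_to_root hy1 hyn⟩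
  set z := sInf S with hz
  have hzS : z ∈ S := Nat.sInf_mem ⟨n, hnS⟩
  have hzx : x ≠ z := by intro he; apply hnd2; rw [he]; exact hzS.2
  have hzy : y ≠ z := by intro he; apply hnd1; rw [he]; exact hzS.1
  obtain ⟨u, c, hxc, hpc, hic⟩ := insub_of_descend_ne hzS.1 hzx
  obtain ⟨v, c', hyc, hpc', hic'⟩ := insub_of_descend_ne hzS.2 hzy
  have hbz := descend_bounds hzS.1
  have hz1 : 1 ≤ z := hbz.2.2.1
  have hbc := descend_bounds hxc
  have hbc' := descend_bounds hyc
  have hcn : c < n := insub_witness_lt ⟨hbc.2.2.1, hbc.2.2.2⟩ (hpc ▸ hz1)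
  have hcn' : c' < n := insub_witness_lt ⟨hbc'.2.2.1, hbc'.2.2.2⟩ (hpc' ▸ hz1)
  have huv : u ≠ v := by
    intro he
    have hcc : c = c' := T.slot_inj c c' hbc.2.2.1 hcn hbc'.2.2.1 hcn'
      (by rw [hpc, hpc']) (by rw [hic, hic', he])
    have hcS : c ∈ S := ⟨hxc, hcc ▸ hyc⟩
    have h1 := Nat.sInf_le hcS
    have h2 := T.parent_gt c hbc.2.2.1 hcn
    rw [hpc] at h2
    omega
  refine ⟨z, u, v, ?_, ?_, hbz.2.2.2, huv, ⟨c, hxc, hpc, hic⟩, ⟨c', hyc, hpc', hic'⟩⟩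
  · exact lt_of_le_of_ne (descend_le hzS.1) hzx
  · exact lt_of_le_of_ne (descend_le hzS.2) hzy

lemma exists_card_ne {x y : ℕ} (hx1 : 1 ≤ x) (hxy : x < y) (hyn : y ≤ n)
    (hnd : ¬ T.Descend x y) :
    ∃ z, y < z ∧ z ≤ n ∧ T.card z x ≠ T.card z y := by
  have hnd2 : ¬ T.Descend y x := fun h => absurd (descend_le h) (by omega)
  obtain ⟨z, u, v, hxz, hyz, hzn, huv, hu, hv⟩ :=
    lca hx1 (by omega) (by omega) hyn hnd hnd2
  have hz1 : 1 ≤ z := by omega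
  exact ⟨z, hyz, hzn, by rw [card_insub hz1 hu, card_insub hz1 hv]; exact huv⟩

lemma parent_eq_of {x p : ℕ} (hx1 : 1 ≤ x) (hxn : x < n) (hd : T.Descend x p)
    (hne : x ≠ p) (hmin : ∀ y, x < y → y < p → ¬ T.Descend x y) : T.parent x = p := by
  have h1 : T.parent x ≤ p := descend_parent_le hd hne
  rcases eq_or_lt_of_le h1 with h | h
  · exact h
  · exact absurd (T.descend_step hx1 hxn) (hmin _ (T.parent_gt x hx1 hxn) h)

/-- in a Tamari tree, a positive card comes from genuine subtree membership -/
lemma tamari_pos (hT : T.IsTamari) {x y : ℕ} (hxy : x < y)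
    (hne : T.card y x ≠ 0) : ∃ j, 1 ≤ j ∧ T.InSub y j x := by
  have hy1 : 1 ≤ y := by omega
  by_cases hex : ∃ j, T.InSub y j x
  · obtain ⟨j, hj⟩ := hex
    refine ⟨j, ?_, hj⟩
    rw [card_insub hy1 hj] at hne
    omega
  · exfalso
    rw [card_not_insub hex] at hne
    by_cases hcond : 1 ≤ x ∧ x < y ∧ y ≤ n ∧ ¬ T.LeftOf x y
    · obtain ⟨hx1, _, hyn, hnl⟩ := hcond
      have hnd : ¬ T.Descend x y := by
        intro h
        exact hex (insub_exists_of_descend h (by omega))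
      have hnd2 : ¬ T.Descend y x := fun h => absurd (descend_le h) (by omega)
      obtain ⟨z, u, v, hxz, hyz, hzn, huv, hu, hv⟩ := lca hx1 (by omega) hy1 hyn hnd hnd2
      have hz1 : 1 ≤ z := by omega
      have hle := hT x y z hxy hyz
      rw [card_insub hz1 hu, card_insub hz1 hv] at hle
      have : u < v := lt_of_le_of_ne hle huv
      exact hnl ⟨z, u, v, this, hu, hv⟩
    · rw [if_neg hcond] at hne
      exact hne rfl

lemma insubminus0_descend {α x : ℕ} (hα1 : 1 ≤ α) (hαn : α ≤ n)
    (h : T.InSubMinus0 α x) : T.Descend x α := by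
  rcases h with rfl | ⟨j, _, hj⟩
  · exact descend_refl hα1 hαn
  · exact descend_of_insub hj hα1

lemma insubminus0_le {α x : ℕ} (hα1 : 1 ≤ α) (hαn : α ≤ n)
    (h : T.InSubMinus0 α x) : x ≤ α :=
  descend_le (insubminus0_descend hα1 hαn h)

lemma insubminus0_trans {α x y j : ℕ} (hα1 : 1 ≤ α) (hy : T.InSubMinus0 α y)
    (hj1 : 1 ≤ j) (hj : T.InSub y j x) : T.InSubMinus0 α x := by
  have hy1 : 1 ≤ y := by
    rcases hy with rfl | ⟨j', _, hj'⟩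
    · exact hα1
    · obtain ⟨cw, hcw, _, _⟩ := hj'
      exact (descend_bounds hcw).1
  rcases hy with rfl | ⟨j', hj'1, hj'⟩
  · exact Or.inr ⟨j, hj1, hj⟩
  · exact Or.inr ⟨j', hj'1, insub_trans (descend_of_insub hj hy1) hj'⟩

end SDecTree
namespace SDecTree

variable {n : ℕ} {s : ℕ → ℕ} {T : SDecTree n s}

theorem tcInv_rot (hT : T.IsTamari) {α β : ℕ} (h : T.TamariAscent α β) (y x : ℕ) :
    tcInv (addInv s T.card β α) y x
      = T.card y x + (if y = β ∧ T.InSubMinus0 α x then 1 else 0) := by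
  classical
  obtain ⟨hα1, hαn, hpα, hcα⟩ := h
  have hαβ : α < β := hpα ▸ T.parent_gt α hα1 hαn
  have hβn : β ≤ n := hpα ▸ T.parent_le α hα1 hαn
  have hdαβ : T.Descend α β := hpα ▸ T.descend_step hα1 hαn
  have hβ1 : 1 ≤ β := by omega
  have hBd : ∀ x, T.InSubMinus0 α x → T.Descend x α :=
    fun x hx => insubminus0_descend hα1 (by omega) hx
  set Jf : ℕ → ℕ → ℕ :=
    fun y x => T.card y x + (if y = β ∧ T.InSubMinus0 α x then 1 else 0) with hJf
  have htrans : IsTransitiveInv Jf := by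
    intro x y z hxy hyz
    by_cases h0 : Jf y x = 0
    · exact Or.inl h0
    right
    simp only [hJf] at h0 ⊢
    by_cases hbx : y = β ∧ T.InSubMinus0 α x
    · obtain ⟨rfl, hBx⟩ := hbx
      have hzβ : ¬ (z = y ∧ T.InSubMinus0 α y) := fun hh => absurd hh.1 (by omega)
      have hzβ' : ¬ (z = y ∧ T.InSubMinus0 α x) := fun hh => absurd hh.1 (by omega)
      have hdxβ : T.Descend x y := descend_trans (hBd x hBx) hdαβ
      have hc : T.card z x = T.card z y := descend_card hdxβ hyz
      rw [if_neg hzβ, if_neg hzβ', hc]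
    · have hcyx : T.card y x ≠ 0 := by
        intro hh; apply h0; rw [hh, if_neg hbx]
      obtain ⟨j, hj1, hj⟩ := tamari_pos hT hxy hcyx
      have hy1 : 1 ≤ y := by omega
      have hdxy : T.Descend x y := descend_of_insub hj hy1
      have hc : T.card z x = T.card z y := descend_card hdxy hyz
      rw [hc]
      by_cases hby : z = β ∧ T.InSubMinus0 α y
      · have hbx2 : z = β ∧ T.InSubMinus0 α x :=
          ⟨hby.1, insubminus0_trans hα1 hby.2 hj1 hj⟩
        rw [if_pos hby, if_pos hbx2]
      · rw [if_neg hby]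
        exact Nat.add_le_add_left (Nat.zero_le _) _
  have hge : ∀ y x, addInv s T.card β α y x ≤ Jf y x := by
    intro y x
    simp only [hJf, addInv]
    by_cases hh : y = β ∧ x = α
    · rw [if_pos hh, if_pos ⟨hh.1, by rw [hh.2]; exact Or.inl rfl⟩]
      exact le_trans (min_le_left _ _) (by omega)
    · rw [if_neg hh]
      exact Nat.le_add_right _ _
  have hIβα : addInv s T.card β α β α = T.card β α + 1 := by
    simp only [addInv, if_pos (⟨rfl, rfl⟩ : β = β ∧ α = α)]
    exact min_eq_left (by omega)
  have hmin : ∀ (J' : ℕ → ℕ → ℕ), IsTransitiveInv J' →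
      (∀ y' x', addInv s T.card β α y' x' ≤ J' y' x') → ∀ y x, Jf y x ≤ J' y x := by
    intro J' hJt hJge y x
    simp only [hJf]
    by_cases hb : y = β ∧ T.InSubMinus0 α x
    · obtain ⟨rfl, hBx⟩ := hb
      rcases hBx with rfl | ⟨j, hj1, hj⟩
      · rw [if_pos ⟨rfl, Or.inl rfl⟩]
        have h4 := hJge y x
        rw [hIβα] at h4
        omega
      · have hxα : x < α := insub_lt hj hα1
        have hcαx : T.card α x = j := card_insub hα1 hj
        have hIαx : addInv s T.card y α α x = T.card α x := by
          simp only [addInv]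
          rw [if_neg]
          rintro ⟨h1, -⟩
          omega
        have hJαx : J' α x ≠ 0 := by
          have h4 := hJge α x
          rw [hIαx, hcαx] at h4
          omega
        rcases hJt x α y hxα hαβ with h | h
        · exact absurd h hJαx
        · have h2 : T.card y α + 1 ≤ J' y α := by rw [← hIβα]; exact hJge y α
          have h3 : T.card y x = T.card y α :=
            descend_card (descend_of_insub hj hα1) hαβ
          rw [if_pos ⟨rfl, Or.inr ⟨j, hj1, hj⟩⟩, h3]
          omega
    · rw [if_neg hb]
      have : addInv s T.card β α y x = T.card y x := by
        simp only [addInv]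
        rw [if_neg]
        rintro ⟨rfl, rfl⟩
        exact hb ⟨rfl, Or.inl rfl⟩
      rw [← this]
      have := hJge y x
      omega
  have hmem : (T.card y x + (if y = β ∧ T.InSubMinus0 α x then 1 else 0)) ∈
      {m | ∃ J : ℕ → ℕ → ℕ, IsTransitiveInv J ∧
        (∀ y' x', addInv s T.card β α y' x' ≤ J y' x') ∧ J y x = m} :=
    ⟨Jf, htrans, hge, rfl⟩
  simp only [tcInv]
  apply le_antisymm
  · exact csInf_le (OrderBot.bddBelow _) hmem
  · refine le_csInf ⟨_, hmem⟩ ?_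
    rintro m ⟨J', hJt, hJge, rfl⟩
    exact hmin J' hJt hJge y x

end SDecTree
/-- The list of labels of the consecutive cover relations along a saturated chain,
recorded as a list of poset elements. -/
def labelsOf {α : Type*} (lab : α → α → ℕ) (L : List α) : List ℕ :=
  (L.zip L.tail).map fun p => lab p.1 p.2

/-- `(c,d)` is always a Tamari tree ascent of `Z`; and if `(a,b)` is not a
Tamari tree ascent of `Q`, then `b = c` and `a` is the `0`-th child of `c` in `T`. -/
theorem tam_stop_being_ascent (n : ℕ) (s : ℕ → ℕ) (T Z Q : SDecTree n s)
    (a b c d : ℕ) (hT : SDecTree.IsTamari T) (hac : a < c)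
    (hZ : SDecTree.IsTamRotation T Z a b) (hQ : SDecTree.IsTamRotation T Q c d) :
    Z.TamariAscent c d ∧
    (¬ Q.TamariAscent a b → b = c ∧ T.parent a = c ∧ T.idx a = 0) := by
  classical
  obtain ⟨hZasc, hZcard⟩ := hZ
  obtain ⟨hQasc, hQcard⟩ := hQ
  obtain ⟨ha1, han, hpab, hcab⟩ := hZasc
  obtain ⟨hc1, hcn, hpcd, hccd⟩ := hQasc
  have hab : a < b := hpab ▸ T.parent_gt a ha1 han
  have hbn : b ≤ n := hpab ▸ T.parent_le a ha1 han
  have hcd : c < d := hpcd ▸ T.parent_gt c hc1 hcn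
  have hdn : d ≤ n := hpcd ▸ T.parent_le c hc1 hcn
  have hdab : T.Descend a b := hpab ▸ T.descend_step ha1 han
  have hdcd : T.Descend c d := hpcd ▸ T.descend_step hc1 hcn
  have hZascT : T.TamariAscent a b := ⟨ha1, han, hpab, hcab⟩
  have hQascT : T.TamariAscent c d := ⟨hc1, hcn, hpcd, hccd⟩
  have Zc : ∀ y x, 1 ≤ x → x < y → y ≤ n →
      Z.card y x = T.card y x + (if y = b ∧ T.InSubMinus0 a x then 1 else 0) := by
    intro y x h1 h2 h3
    rw [hZcard y x h1 h2 h3, SDecTree.tcInv_rot hT hZascT]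
  have Qc : ∀ y x, 1 ≤ x → x < y → y ≤ n →
      Q.card y x = T.card y x + (if y = d ∧ T.InSubMinus0 c x then 1 else 0) := by
    intro y x h1 h2 h3
    rw [hQcard y x h1 h2 h3, SDecTree.tcInv_rot hT hQascT]
  have hnB : ∀ x, a < x → ¬ T.InSubMinus0 a x := by
    intro x hx hB
    have := SDecTree.insubminus0_le ha1 (by omega) hB
    omega
  have ZcT : ∀ y x, a < x → x < y → y ≤ n → Z.card y x = T.card y x := by
    intro y x h1 h2 h3
    rw [Zc y x (by omega) h2 h3, if_neg (fun hh => hnB x h1 hh.2)]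
    omega
  have part1 : Z.TamariAscent c d := by
    have hZdc : Z.card d c = T.card d c := ZcT d c hac hcd hdn
    have hZdesc : Z.Descend c d := by
      by_contra hnd
      obtain ⟨z, hz1, hz2, hz3⟩ := SDecTree.exists_card_ne hc1 hcd hdn hnd
      apply hz3
      rw [ZcT z c hac (by omega) hz2, ZcT z d (by omega) hz1 hz2]
      exact SDecTree.descend_card hdcd hz1
    have hZmin : ∀ y, c < y → y < d → ¬ Z.Descend c y := by
      intro y hy1 hy2 hy
      have heq : ∀ z, y < z → z ≤ n → T.card z c = T.card z y := by
        intro z hz1 hz2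
        have h4 := SDecTree.descend_card hy hz1
        rwa [ZcT z c hac (by omega) hz2, ZcT z y (by omega) hz1 hz2] at h4
      have hndT : ¬ T.Descend c y := by
        intro hd'
        have := SDecTree.descend_parent_le hd' (by omega)
        rw [hpcd] at this
        omega
      obtain ⟨z, hz1, hz2, hz3⟩ := SDecTree.exists_card_ne hc1 hy1 (by omega) hndT
      exact hz3 (heq z hz1 hz2)
    exact ⟨hc1, hcn, SDecTree.parent_eq_of hc1 hcn hZdesc (by omega) hZmin,
      by rw [hZdc]; exact hccd⟩
  refine ⟨part1, ?_⟩
  intro hnQ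
  by_contra hexc
  apply hnQ
  have hexc' : ¬ (b = c ∧ T.idx a = 0) := by
    intro hh
    exact hexc ⟨hh.1, by rw [hpab]; exact hh.1, hh.2⟩
  have hIa : T.InSub b (T.idx a) a :=
    ⟨a, SDecTree.descend_refl ha1 (by omega), hpab, rfl⟩
  have hBab : T.InSubMinus0 c a ↔ T.InSubMinus0 c b := by
    constructor
    · intro hBa
      have hda : T.Descend a c := SDecTree.insubminus0_descend hc1 (by omega) hBa
      have hbc : b ≤ c := by
        have := SDecTree.descend_parent_le hda (by omega)
        rwa [hpab] at this
      rcases eq_or_lt_of_le hbc with he | hlt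
      · exact Or.inl he
      · have hdbc : T.Descend b c := SDecTree.descend_total hdab hda hbc
        obtain ⟨jb, cb, h1, h2, h3⟩ := SDecTree.insub_of_descend_ne hdbc (by omega)
        have hjb : T.InSub c jb b := ⟨cb, h1, h2, h3⟩
        have hja : T.InSub c jb a := SDecTree.insub_trans hdab hjb
        rcases hBa with he | ⟨ja, hja1, hja'⟩
        · omega
        · have : ja = jb := SDecTree.insub_unique hc1 hja' hja
          exact Or.inr ⟨jb, by omega, hjb⟩
    · intro hBb
      rcases hBb with he | ⟨jb, hjb1, hjb⟩
      · have hia0 : T.idx a ≠ 0 := fun h0 => hexc' ⟨he, h0⟩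
        exact Or.inr ⟨T.idx a, by omega, he ▸ hIa⟩
      · exact Or.inr ⟨jb, hjb1, SDecTree.insub_trans hdab hjb⟩
  have hQdesc : Q.Descend a b := by
    by_contra hnd
    obtain ⟨z, hz1, hz2, hz3⟩ := SDecTree.exists_card_ne ha1 hab hbn hnd
    apply hz3
    rw [Qc z a ha1 (by omega) hz2, Qc z b (by omega) hz1 hz2,
        SDecTree.descend_card hdab hz1,
        if_congr (and_congr_right (fun _ => hBab)) rfl rfl]
  have hQmin : ∀ y, a < y → y < b → ¬ Q.Descend a y := by
    intro y hy1 hy2 hQd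
    have heq : ∀ z, y < z → z ≤ n →
        T.card z a + (if z = d ∧ T.InSubMinus0 c a then 1 else 0)
          = T.card z y + (if z = d ∧ T.InSubMinus0 c y then 1 else 0) := by
      intro z hz1 hz2
      have h4 := SDecTree.descend_card hQd hz1
      rwa [Qc z a ha1 (by omega) hz2, Qc z y (by omega) hz1 hz2] at h4
    have hndT : ¬ T.Descend a y := by
      intro hd'
      have := SDecTree.descend_parent_le hd' (by omega)
      rw [hpab] at this
      omega
    by_cases hBa : T.InSubMinus0 c a <;> by_cases hBy : T.InSubMinus0 c y
    · -- both: plain equality for all z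
      obtain ⟨z, hz1, hz2, hz3⟩ := SDecTree.exists_card_ne ha1 hy1 (by omega) hndT
      apply hz3
      have h5 := heq z hz1 hz2
      by_cases hzd : z = d
      · rw [if_pos ⟨hzd, hBa⟩, if_pos ⟨hzd, hBy⟩] at h5; omega
      · rw [if_neg (fun hh => hzd hh.1), if_neg (fun hh => hzd hh.1)] at h5; omega
    · -- Ba, ¬By
      have hda : T.Descend a c := SDecTree.insubminus0_descend hc1 (by omega) hBa
      have hbc : b ≤ c := by
        have := SDecTree.descend_parent_le hda (by omega)
        rwa [hpab] at this
      have h5 := heq d (by omega) hdn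
      rw [if_pos ⟨rfl, hBa⟩, if_neg (fun hh => hBy hh.2)] at h5
      have h6 : T.card d a = T.card d c := SDecTree.descend_card hda hcd
      have h7 := hT y c d (by omega) hcd
      omega
    · -- ¬Ba, By
      have hyc : y ≤ c := SDecTree.insubminus0_le hc1 (by omega) hBy
      have h5 := heq d (by omega) hdn
      rw [if_neg (fun hh => hBa hh.2), if_pos ⟨rfl, hBy⟩] at h5
      have h6 : T.card d y = T.card d c := by
        rcases hBy with he | hBy'
        · rw [he]
        · exact SDecTree.descend_card
            (SDecTree.insubminus0_descend hc1 (by omega) (Or.inr hBy')) hcd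
      have h7 := hT a c d hac hcd
      omega
    · -- neither
      obtain ⟨z, hz1, hz2, hz3⟩ := SDecTree.exists_card_ne ha1 hy1 (by omega) hndT
      apply hz3
      have h5 := heq z hz1 hz2
      rw [if_neg (fun hh => hBa hh.2), if_neg (fun hh => hBy hh.2)] at h5
      omega
  have hQp : Q.parent a = b := SDecTree.parent_eq_of ha1 han hQdesc (by omega) hQmin
  have hQba : Q.card b a = T.card b a := by
    have hnbd : ¬ (b = d ∧ T.InSubMinus0 c a) := by
      intro hh
      obtain ⟨hbd, hBa⟩ := hh
      have hda : T.Descend a c := SDecTree.insubminus0_descend hc1 (by omega) hBa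
      have := SDecTree.descend_parent_le hda (by omega)
      rw [hpab] at this
      omega
    rw [Qc b a ha1 hab hbn, if_neg hnbd]
    omega
  exact ⟨ha1, han, hQp, by rw [hQba]; exact hcab⟩
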